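/- For a memoryless channel Q_i(b_i | b^{i-1}, a^i) = Q_i(b_i | a_i) on finite alphabets, the supremum of directed information I(A^n → B^n) over all feedback input kernels P_i(a_i | a^{i-1}, b^{i-1}) equals the supremum over memoryless input distributions π_i(a_i), i=0,...,n, of ∑_{i=0}^n I(A_i; B_i), where I(A_i;B_i) is the mutual information for the single-letter joint pmf Q_i(b_i|a_i) π_i(a_i). -/

import Mathlib

open Finset

/-- Time indices `j ≤ i`. -/
def idxLe (n : ℕ) (i : Fin (n+1)) : Finset (Fin (n+1)) :=
  Finset.univ.filter fun j => (j : ℕ) ≤ (i : ℕ)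

/-- Time indices `j < i`. -/
def idxLt (n : ℕ) (i : Fin (n+1)) : Finset (Fin (n+1)) :=
  Finset.univ.filter fun j => (j : ℕ) < (i : ℕ)

/-- Time indices `i - M ≤ j < i` (the window of the last `M` outputs). -/
def idxWin (n : ℕ) (i : Fin (n+1)) (M : ℕ) : Finset (Fin (n+1)) :=
  Finset.univ.filter fun j => (j : ℕ) < (i : ℕ) ∧ (i : ℕ) ≤ (j : ℕ) + M

variable {n : ℕ} {A B : Type} [Fintype A] [Fintype B] [DecidableEq A] [DecidableEq B]

/-- Marginal of the joint pmf `μ` on the `A`-coordinates in `SA` and the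
`B`-coordinates in `SB`, evaluated at `(a, b)`. -/
noncomputable def marg (μ : (Fin (n+1) → A) → (Fin (n+1) → B) → ℝ)
    (SA SB : Finset (Fin (n+1))) (a : Fin (n+1) → A) (b : Fin (n+1) → B) : ℝ :=
  ∑ a' : Fin (n+1) → A, ∑ b' : Fin (n+1) → B,
    if (∀ j ∈ SA, a' j = a j) ∧ (∀ j ∈ SB, b' j = b j) then μ a' b' else 0

/-- Marginal of `μ` on `B`-coordinates in `SB`. -/
noncomputable def margB (μ : (Fin (n+1) → A) → (Fin (n+1) → B) → ℝ)
    (SB : Finset (Fin (n+1))) (b : Fin (n+1) → B) : ℝ :=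
  ∑ a' : Fin (n+1) → A, ∑ b' : Fin (n+1) → B,
    if ∀ j ∈ SB, b' j = b j then μ a' b' else 0

/-- The induced conditional output pmf `Π_i(b_i | b^{i-1})`. -/
noncomputable def outCond (μ : (Fin (n+1) → A) → (Fin (n+1) → B) → ℝ)
    (i : Fin (n+1)) (b : Fin (n+1) → B) : ℝ :=
  margB μ (idxLe n i) b / margB μ (idxLt n i) b

/-- Conditional mutual information `I(A_{TA}; B_i | B_{SB})` under `μ`
(terms with zero joint probability vanish). -/
noncomputable def cmi (μ : (Fin (n+1) → A) → (Fin (n+1) → B) → ℝ)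
    (TA : Finset (Fin (n+1))) (i : Fin (n+1)) (SB : Finset (Fin (n+1))) : ℝ :=
  ∑ a : Fin (n+1) → A, ∑ b : Fin (n+1) → B,
    μ a b * Real.log (marg μ TA (insert i SB) a b * marg μ ∅ SB a b /
      (marg μ TA SB a b * marg μ ∅ (insert i SB) a b))

/-- Directed information `I(A^n → B^n) = ∑_i I(A^i; B_i | B^{i-1})`. -/
noncomputable def DI (μ : (Fin (n+1) → A) → (Fin (n+1) → B) → ℝ) : ℝ :=
  ∑ i : Fin (n+1), cmi μ (idxLe n i) i (idxLt n i)

/-- A family of channel kernels `Q_i(b_i | b^{i-1}, a^i)`: nonnegative, summing to one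
over `b_i`, and depending only on `(a^i, b^i)`. -/
def IsChannel (Q : Fin (n+1) → (Fin (n+1) → A) → (Fin (n+1) → B) → ℝ) : Prop :=
  (∀ i a b, 0 ≤ Q i a b) ∧
  (∀ i a b, ∑ x : B, Q i a (Function.update b i x) = 1) ∧
  (∀ (i : Fin (n+1)) (a a' : Fin (n+1) → A) (b b' : Fin (n+1) → B),
    (∀ j : Fin (n+1), (j:ℕ) ≤ (i:ℕ) → a j = a' j) →
    (∀ j : Fin (n+1), (j:ℕ) ≤ (i:ℕ) → b j = b' j) → Q i a b = Q i a' b')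

/-- A family of feedback input kernels `P_i(a_i | a^{i-1}, b^{i-1})`: nonnegative,
summing to one over `a_i`, and depending only on `(a^i, b^{i-1})`. -/
def IsInput (P : Fin (n+1) → (Fin (n+1) → A) → (Fin (n+1) → B) → ℝ) : Prop :=
  (∀ i a b, 0 ≤ P i a b) ∧
  (∀ i a b, ∑ x : A, P i (Function.update a i x) b = 1) ∧
  (∀ (i : Fin (n+1)) (a a' : Fin (n+1) → A) (b b' : Fin (n+1) → B),
    (∀ j : Fin (n+1), (j:ℕ) ≤ (i:ℕ) → a j = a' j) →
    (∀ j : Fin (n+1), (j:ℕ) < (i:ℕ) → b j = b' j) → P i a b = P i a' b')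

/-- The joint pmf induced by channel kernels `Q` and input kernels `P`. -/
noncomputable def joint (Q P : Fin (n+1) → (Fin (n+1) → A) → (Fin (n+1) → B) → ℝ)
    (a : Fin (n+1) → A) (b : Fin (n+1) → B) : ℝ :=
  ∏ i : Fin (n+1), Q i a b * P i a b



section Generic
variable (μ : (Fin (n+1) → A) → (Fin (n+1) → B) → ℝ)

lemma marg_nonneg (hμ : ∀ a b, 0 ≤ μ a b) (SA SB : Finset (Fin (n+1)))
    (a : Fin (n+1) → A) (b : Fin (n+1) → B) : 0 ≤ marg μ SA SB a b := by
  apply Finset.sum_nonneg; intro a' _; apply Finset.sum_nonneg; intro b' _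
  split <;> simp [hμ]

lemma self_le_marg (hμ : ∀ a b, 0 ≤ μ a b) (SA SB : Finset (Fin (n+1)))
    (a : Fin (n+1) → A) (b : Fin (n+1) → B) : μ a b ≤ marg μ SA SB a b := by
  unfold marg
  have h1 : ∀ a' : Fin (n+1) → A, 0 ≤ ∑ b' : Fin (n+1) → B,
      (if (∀ j ∈ SA, a' j = a j) ∧ (∀ j ∈ SB, b' j = b j) then μ a' b' else 0) := by
    intro a'; apply Finset.sum_nonneg; intro b' _; split <;> simp [hμ]
  calc μ a b = (if (∀ j ∈ SA, a j = a j) ∧ (∀ j ∈ SB, b j = b j) then μ a b else 0) := by simp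
  _ ≤ ∑ b' : Fin (n+1) → B, (if (∀ j ∈ SA, a j = a j) ∧ (∀ j ∈ SB, b' j = b j) then μ a b' else 0) := by
      apply Finset.single_le_sum (f := fun b' => if (∀ j ∈ SA, a j = a j) ∧ (∀ j ∈ SB, b' j = b j) then μ a b' else 0)
        (fun b' _ => by split <;> simp [hμ]) (Finset.mem_univ b)
  _ ≤ _ := by
      apply Finset.single_le_sum (f := fun a' => ∑ b' : Fin (n+1) → B,
        (if (∀ j ∈ SA, a' j = a j) ∧ (∀ j ∈ SB, b' j = b j) then μ a' b' else 0))
        (fun a' _ => h1 a') (Finset.mem_univ a)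

lemma marg_le_total (hμ : ∀ a b, 0 ≤ μ a b) (SA SB : Finset (Fin (n+1)))
    (a : Fin (n+1) → A) (b : Fin (n+1) → B) :
    marg μ SA SB a b ≤ ∑ a' : Fin (n+1) → A, ∑ b' : Fin (n+1) → B, μ a' b' := by
  apply Finset.sum_le_sum; intro a' _; apply Finset.sum_le_sum; intro b' _
  split <;> simp [hμ]

lemma marg_dep (SA SB : Finset (Fin (n+1))) {a a' : Fin (n+1) → A} {b b' : Fin (n+1) → B}
    (ha : ∀ j ∈ SA, a j = a' j) (hb : ∀ j ∈ SB, b j = b' j) :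
    marg μ SA SB a b = marg μ SA SB a' b' := by
  unfold marg
  apply Finset.sum_congr rfl; intro x _; apply Finset.sum_congr rfl; intro y _
  congr 1
  apply propext
  constructor
  · rintro ⟨h1, h2⟩
    exact ⟨fun j hj => (h1 j hj).trans (ha j hj), fun j hj => (h2 j hj).trans (hb j hj)⟩
  · rintro ⟨h1, h2⟩
    exact ⟨fun j hj => (h1 j hj).trans (ha j hj).symm, fun j hj => (h2 j hj).trans (hb j hj).symm⟩

lemma margSplit_A {k : Fin (n+1)} {SA : Finset (Fin (n+1))} (hk : k ∉ SA)
    (SB : Finset (Fin (n+1))) (a : Fin (n+1) → A) (b : Fin (n+1) → B) :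
    marg μ SA SB a b = ∑ x : A, marg μ (insert k SA) SB (Function.update a k x) b := by
  unfold marg
  symm
  rw [Finset.sum_comm]
  apply Finset.sum_congr rfl; intro a' _
  rw [Finset.sum_comm]
  apply Finset.sum_congr rfl; intro b' _
  have : ∀ x : A, ((∀ j ∈ insert k SA, a' j = Function.update a k x j) ∧ (∀ j ∈ SB, b' j = b j))
      ↔ (a' k = x ∧ ((∀ j ∈ SA, a' j = a j) ∧ (∀ j ∈ SB, b' j = b j))) := by
    intro x
    constructor
    · rintro ⟨h1, h2⟩
      refine ⟨by simpa using h1 k (Finset.mem_insert_self k SA), ⟨fun j hj => ?_, h2⟩⟩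
      have := h1 j (Finset.mem_insert_of_mem hj)
      rwa [Function.update_of_ne (ne_of_mem_of_not_mem hj hk)] at this
    · rintro ⟨h0, h1, h2⟩
      refine ⟨fun j hj => ?_, h2⟩
      rcases Finset.mem_insert.1 hj with rfl | hj
      · simpa using h0
      · rw [Function.update_of_ne (ne_of_mem_of_not_mem hj hk)]; exact h1 j hj
  simp only [this, ite_and]
  simp [Finset.sum_ite_eq]

lemma margSplit_B {k : Fin (n+1)} {SB : Finset (Fin (n+1))} (hk : k ∉ SB)
    (SA : Finset (Fin (n+1))) (a : Fin (n+1) → A) (b : Fin (n+1) → B) :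
    marg μ SA SB a b = ∑ y : B, marg μ SA (insert k SB) a (Function.update b k y) := by
  unfold marg
  symm
  rw [Finset.sum_comm]
  apply Finset.sum_congr rfl; intro a' _
  rw [Finset.sum_comm]
  apply Finset.sum_congr rfl; intro b' _
  have : ∀ y : B, ((∀ j ∈ SA, a' j = a j) ∧ (∀ j ∈ insert k SB, b' j = Function.update b k y j))
      ↔ (b' k = y ∧ ((∀ j ∈ SA, a' j = a j) ∧ (∀ j ∈ SB, b' j = b j))) := by
    intro y
    constructor
    · rintro ⟨h1, h2⟩
      refine ⟨by simpa using h2 k (Finset.mem_insert_self k SB), ⟨h1, fun j hj => ?_⟩⟩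
      have := h2 j (Finset.mem_insert_of_mem hj)
      rwa [Function.update_of_ne (ne_of_mem_of_not_mem hj hk)] at this
    · rintro ⟨h0, h1, h2⟩
      refine ⟨h1, fun j hj => ?_⟩
      rcases Finset.mem_insert.1 hj with rfl | hj
      · simpa using h0
      · rw [Function.update_of_ne (ne_of_mem_of_not_mem hj hk)]; exact h2 j hj
  simp only [this, ite_and]
  simp [Finset.sum_ite_eq]

end Generic


/-- indices with value < k (ℕ version) -/
def ltk (n k : ℕ) : Finset (Fin (n+1)) := Finset.univ.filter fun j => (j : ℕ) < k

lemma mem_ltk {k : ℕ} {j : Fin (n+1)} : j ∈ ltk n k ↔ (j:ℕ) < k := by simp [ltk]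
lemma mem_idxLe {i j : Fin (n+1)} : j ∈ idxLe n i ↔ (j:ℕ) ≤ (i:ℕ) := by simp [idxLe]
lemma mem_idxLt {i j : Fin (n+1)} : j ∈ idxLt n i ↔ (j:ℕ) < (i:ℕ) := by simp [idxLt]

lemma ltk_top : ltk n (n+1) = Finset.univ := by
  ext j; simp [mem_ltk, j.isLt]

lemma ltk_zero : ltk n 0 = ∅ := by ext j; simp [mem_ltk]

lemma ltk_succ {k : ℕ} (hk : k < n+1) : ltk n (k+1) = insert ⟨k, hk⟩ (ltk n k) := by
  ext j; simp only [mem_ltk, Finset.mem_insert, Fin.ext_iff]; omega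

lemma not_mem_ltk {k : ℕ} (hk : k < n+1) : (⟨k, hk⟩ : Fin (n+1)) ∉ ltk n k := by
  simp [mem_ltk]

lemma idxLe_eq_ltk {i : Fin (n+1)} : idxLe n i = ltk n ((i:ℕ)+1) := by
  ext j; simp only [mem_idxLe, mem_ltk]; omega

lemma idxLt_eq_ltk {i : Fin (n+1)} : idxLt n i = ltk n (i:ℕ) := by
  ext j; simp only [mem_idxLt, mem_ltk]

lemma not_mem_idxLt {i : Fin (n+1)} : i ∉ idxLt n i := by simp [mem_idxLt]

lemma mem_idxLe_self {i : Fin (n+1)} : i ∈ idxLe n i := by simp [mem_idxLe]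

lemma insert_idxLt {i : Fin (n+1)} : insert i (idxLt n i) = idxLe n i := by
  ext j; simp only [mem_idxLe, mem_idxLt, Finset.mem_insert, Fin.ext_iff]; omega

lemma idxLe_erase {i : Fin (n+1)} : (idxLe n i).erase i = idxLt n i := by
  ext j; simp only [mem_idxLe, mem_idxLt, Finset.mem_erase, Fin.ext_iff, ne_eq]; omega

section Joint
variable {Q P : Fin (n+1) → (Fin (n+1) → A) → (Fin (n+1) → B) → ℝ}
variable (hQ : IsChannel Q) (hP : IsInput P)

include hQ hP

lemma joint_nonneg (a : Fin (n+1) → A) (b : Fin (n+1) → B) : 0 ≤ joint Q P a b :=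
  Finset.prod_nonneg fun i _ => mul_nonneg (hQ.1 i a b) (hP.1 i a b)

/-- prefix factorization -/
lemma marg_ltk (k : ℕ) (hk : k ≤ n+1) (a : Fin (n+1) → A) (b : Fin (n+1) → B) :
    marg (joint Q P) (ltk n k) (ltk n k) a b = ∏ j ∈ ltk n k, Q j a b * P j a b := by
  obtain ⟨d, hd⟩ : ∃ d, k + d = n + 1 := ⟨n+1-k, by omega⟩
  clear hk
  induction d generalizing k a b with
  | zero =>
    have hk : k = n+1 := by omega
    subst hk
    rw [ltk_top]
    unfold marg
    have hcond : ∀ (a' : Fin (n+1) → A) (b' : Fin (n+1) → B),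
        ((∀ j ∈ Finset.univ, a' j = a j) ∧ (∀ j ∈ Finset.univ, b' j = b j)) ↔ (a' = a ∧ b' = b) := by
      intro a' b'
      simp [funext_iff]
    simp only [hcond, ite_and]
    simp [Finset.sum_ite_eq, joint]
  | succ d ih =>
    have hk : k < n + 1 := by omega
    set kk : Fin (n+1) := ⟨k, hk⟩ with hkk
    have hvk : (kk : ℕ) = k := rfl
    rw [margSplit_A (joint Q P) (not_mem_ltk hk) (ltk n k) a b]
    have step : ∀ x : A, marg (joint Q P) (insert kk (ltk n k)) (ltk n k) (Function.update a kk x) b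
        = ∑ y : B, marg (joint Q P) (ltk n (k+1)) (ltk n (k+1)) (Function.update a kk x) (Function.update b kk y) := by
      intro x
      rw [margSplit_B (joint Q P) (not_mem_ltk hk) (insert kk (ltk n k)) (Function.update a kk x) b]
      rw [ltk_succ hk]
    rw [Finset.sum_congr rfl (fun x _ => step x)]
    have inner : ∀ (x : A) (y : B),
        marg (joint Q P) (ltk n (k+1)) (ltk n (k+1)) (Function.update a kk x) (Function.update b kk y)
        = (Q kk (Function.update a kk x) (Function.update b kk y)
            * P kk (Function.update a kk x) b) * ∏ j ∈ ltk n k, Q j a b * P j a b := by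
      intro x y
      rw [ih (k+1) (Function.update a kk x) (Function.update b kk y) (by omega)]
      rw [ltk_succ hk, Finset.prod_insert (not_mem_ltk hk)]
      congr 1
      · congr 1
        apply hP.2.2
        · intro j _; rfl
        · intro j hj
          apply Function.update_of_ne
          intro h; rw [h, hvk] at hj; omega
      · apply Finset.prod_congr rfl
        intro j hj
        rw [mem_ltk] at hj
        have hQj : Q j (Function.update a kk x) (Function.update b kk y) = Q j a b := by
          apply hQ.2.2
          · intro j' hj'
            apply Function.update_of_ne
            intro h; rw [h, hvk] at hj'; omega
          · intro j' hj'
            apply Function.update_of_ne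
            intro h; rw [h, hvk] at hj'; omega
        have hPj : P j (Function.update a kk x) (Function.update b kk y) = P j a b := by
          apply hP.2.2
          · intro j' hj'
            apply Function.update_of_ne
            intro h; rw [h, hvk] at hj'; omega
          · intro j' hj'
            apply Function.update_of_ne
            intro h; rw [h, hvk] at hj'; omega
        rw [hQj, hPj]
    simp only [inner]
    have h1 : ∀ x : A, ∑ y : B, Q kk (Function.update a kk x) (Function.update b kk y)
        * P kk (Function.update a kk x) b * ∏ j ∈ ltk n k, Q j a b * P j a b
        = P kk (Function.update a kk x) b * ∏ j ∈ ltk n k, Q j a b * P j a b := by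
      intro x
      rw [← Finset.sum_mul, ← Finset.sum_mul, hQ.2.1 kk (Function.update a kk x) b, one_mul]
    simp only [h1]
    rw [← Finset.sum_mul, hP.2.1 kk a b, one_mul]

lemma marg_empty_empty (a : Fin (n+1) → A) (b : Fin (n+1) → B) :
    marg (joint Q P) ∅ ∅ a b = 1 := by
  have := marg_ltk hQ hP 0 (by omega) a b
  rwa [ltk_zero, Finset.prod_empty] at this

lemma joint_sum_one [Nonempty A] [Nonempty B] :
    ∑ a : Fin (n+1) → A, ∑ b : Fin (n+1) → B, joint Q P a b = 1 := by
  have := marg_empty_empty hQ hP (Classical.arbitrary _) (Classical.arbitrary _)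
  unfold marg at this; simpa using this

lemma marg_LeLe (i : Fin (n+1)) (a : Fin (n+1) → A) (b : Fin (n+1) → B) :
    marg (joint Q P) (idxLe n i) (idxLe n i) a b = ∏ j ∈ idxLe n i, Q j a b * P j a b := by
  rw [idxLe_eq_ltk]; exact marg_ltk hQ hP ((i:ℕ)+1) (by omega) a b

lemma marg_LeLt (i : Fin (n+1)) (a : Fin (n+1) → A) (b : Fin (n+1) → B) :
    marg (joint Q P) (idxLe n i) (idxLt n i) a b
      = P i a b * ∏ j ∈ idxLt n i, Q j a b * P j a b := by
  rw [margSplit_B (joint Q P) (not_mem_idxLt) (idxLe n i) a b]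
  have : ∀ y : B, marg (joint Q P) (idxLe n i) (insert i (idxLt n i)) a (Function.update b i y)
      = (Q i a (Function.update b i y) * P i a b) * ∏ j ∈ idxLt n i, Q j a b * P j a b := by
    intro y
    rw [insert_idxLt, marg_LeLe hQ hP i a (Function.update b i y)]
    rw [← insert_idxLt, Finset.prod_insert not_mem_idxLt]
    congr 1
    · congr 1
      apply hP.2.2
      · intro j _; rfl
      · intro j hj
        apply Function.update_of_ne
        intro h; rw [h] at hj; omega
    · apply Finset.prod_congr rfl
      intro j hj
      rw [mem_idxLt] at hj
      have : Function.update b i y j = b j := by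
        apply Function.update_of_ne; intro h; rw [h] at hj; omega
      have hQj : Q j a (Function.update b i y) = Q j a b := by
        apply hQ.2.2
        · intro j' _; rfl
        · intro j' hj'
          apply Function.update_of_ne
          intro h; rw [h] at hj'; omega
      have hPj : P j a (Function.update b i y) = P j a b := by
        apply hP.2.2
        · intro j' _; rfl
        · intro j' hj'
          apply Function.update_of_ne
          intro h; rw [h] at hj'; omega
      rw [hQj, hPj]
  simp only [this]
  rw [← Finset.sum_mul, ← Finset.sum_mul, hQ.2.1 i a b, one_mul]

lemma margI1 (i : Fin (n+1)) (a : Fin (n+1) → A) (b : Fin (n+1) → B) :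
    marg (joint Q P) (idxLe n i) (idxLe n i) a b
      = Q i a b * marg (joint Q P) (idxLe n i) (idxLt n i) a b := by
  rw [marg_LeLe hQ hP, marg_LeLt hQ hP, ← insert_idxLt, Finset.prod_insert not_mem_idxLt]
  ring

end Joint


section Memless
variable {Q P : Fin (n+1) → (Fin (n+1) → A) → (Fin (n+1) → B) → ℝ}
variable (hQ : IsChannel Q) (hP : IsInput P)
variable (hQm : ∀ (i : Fin (n+1)) (a a' : Fin (n+1) → A) (b b' : Fin (n+1) → B),
      a i = a' i → b i = b' i → Q i a b = Q i a' b')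

include hQ hP hQm

lemma margI2gen (i : Fin (n+1)) :
    ∀ (d : ℕ) (SA SB : Finset (Fin (n+1))), i ∈ SA → i ∈ SB →
    SA ⊆ idxLe n i → SB ⊆ idxLe n i →
    d = ((idxLe n i).card - SA.card) + ((idxLe n i).card - SB.card) →
    ∀ a b, marg (joint Q P) SA SB a b = Q i a b * marg (joint Q P) SA (SB.erase i) a b := by
  intro d
  induction d using Nat.strong_induction_on with
  | _ d ih =>
    intro SA SB hiA hiB hA hB hd a b
    by_cases hSA : SA = idxLe n i
    · by_cases hSB : SB = idxLe n i
      · subst hSA; subst hSB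
        rw [idxLe_erase, margI1 hQ hP]
      · -- pick m ∈ Le i \ SB
        have hss : SB ⊂ idxLe n i := lt_of_le_of_ne hB hSB
        obtain ⟨m, hmLe, hmSB⟩ := Finset.exists_of_ssubset hss
        have hmi : m ≠ i := fun h => hmSB (h ▸ hiB)
        rw [margSplit_B (joint Q P) hmSB SA a b]
        have hcard : SB.card < (idxLe n i).card := Finset.card_lt_card hss
        have hstep : ∀ y : B,
            marg (joint Q P) SA (insert m SB) a (Function.update b m y)
            = Q i a b * marg (joint Q P) SA ((insert m SB).erase i) a (Function.update b m y) := by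
          intro y
          rw [ih (((idxLe n i).card - SA.card) + ((idxLe n i).card - (insert m SB).card))
            (by rw [Finset.card_insert_of_notMem hmSB]; omega)
            SA (insert m SB) hiA (Finset.mem_insert_of_mem hiB) hA
            (Finset.insert_subset (mem_idxLe.2 (mem_idxLe.1 hmLe)) hB) rfl]
          congr 1
          apply hQm
          · rfl
          · exact Function.update_of_ne hmi.symm y b
        simp only [hstep]
        rw [← Finset.mul_sum]
        congr 1
        have : ∀ y : B, marg (joint Q P) SA ((insert m SB).erase i) a (Function.update b m y)
            = marg (joint Q P) SA (insert m (SB.erase i)) a (Function.update b m y) := by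
          intro y; rw [Finset.erase_insert_of_ne hmi]
        simp only [this]
        rw [← margSplit_B (joint Q P) (fun h => hmSB (Finset.mem_of_mem_erase h)) SA a b]
    · -- pick m ∈ Le i \ SA
      have hss : SA ⊂ idxLe n i := lt_of_le_of_ne hA hSA
      obtain ⟨m, hmLe, hmSA⟩ := Finset.exists_of_ssubset hss
      have hmi : m ≠ i := fun h => hmSA (h ▸ hiA)
      rw [margSplit_A (joint Q P) hmSA SB a b]
      have hcard : SA.card < (idxLe n i).card := Finset.card_lt_card hss
      have hstep : ∀ x : A,
          marg (joint Q P) (insert m SA) SB (Function.update a m x) b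
          = Q i a b * marg (joint Q P) (insert m SA) (SB.erase i) (Function.update a m x) b := by
        intro x
        rw [ih (((idxLe n i).card - (insert m SA).card) + ((idxLe n i).card - SB.card))
          (by rw [Finset.card_insert_of_notMem hmSA]; omega)
          (insert m SA) SB (Finset.mem_insert_of_mem hiA) hiB
          (Finset.insert_subset hmLe hA) hB rfl]
        congr 1
        apply hQm
        · exact Function.update_of_ne hmi.symm x a
        · rfl
      simp only [hstep]
      rw [← Finset.mul_sum]
      congr 1
      rw [← margSplit_A (joint Q P) hmSA (SB.erase i) a b]

lemma margI2 (i : Fin (n+1)) (a : Fin (n+1) → A) (b : Fin (n+1) → B) :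
    marg (joint Q P) {i} {i} a b = Q i a b * marg (joint Q P) {i} ∅ a b := by
  have := margI2gen hQ hP hQm i
    (((idxLe n i).card - 1) + ((idxLe n i).card - 1)) {i} {i}
    (Finset.mem_singleton_self i) (Finset.mem_singleton_self i)
    (by intro j hj; rw [Finset.mem_singleton] at hj; subst hj; exact mem_idxLe_self)
    (by intro j hj; rw [Finset.mem_singleton] at hj; subst hj; exact mem_idxLe_self)
    (by simp) a b
  simpa using this

end Memless


section Counting
variable (μ : (Fin (n+1) → A) → (Fin (n+1) → B) → ℝ)

/-- marginal onto B-coordinates expressed via full-B pmf -/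
lemma marg_empty_left (SB : Finset (Fin (n+1))) (a : Fin (n+1) → A) (b : Fin (n+1) → B) :
    marg μ ∅ SB a b
      = ∑ b' : Fin (n+1) → B, (if ∀ j ∈ SB, b' j = b j then ∑ a' : Fin (n+1) → A, μ a' b' else 0) := by
  unfold marg
  rw [Finset.sum_comm]
  apply Finset.sum_congr rfl; intro b' _
  simp only [Finset.notMem_empty, false_implies, implies_true, true_and]
  split
  · rfl
  · simp

lemma marg_empty_left_indep (SB : Finset (Fin (n+1))) (a a' : Fin (n+1) → A) (b : Fin (n+1) → B) :
    marg μ ∅ SB a b = marg μ ∅ SB a' b :=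
  marg_dep μ ∅ SB (fun j hj => absurd hj (Finset.notMem_empty j)) (fun _ _ => rfl)

end Counting

lemma count_pinned (S : Finset (Fin (n+1))) (b₀ : Fin (n+1) → B) :
    ((Finset.univ : Finset (Fin (n+1) → B)).filter (fun b => ∀ j ∈ S, b j = b₀ j)).card
      = Fintype.card B ^ (n+1 - S.card) := by
  classical
  rw [← Fintype.card_subtype]
  have e : {b : Fin (n+1) → B // ∀ j ∈ S, b j = b₀ j} ≃ ({j : Fin (n+1) // j ∉ S} → B) :=
    { toFun := fun b j => b.1 j.1
      invFun := fun g => ⟨fun j => if h : j ∈ S then b₀ j else g ⟨j, h⟩,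
        fun j hj => by simp [hj]⟩
      left_inv := fun b => by
        apply Subtype.ext
        funext j
        by_cases h : j ∈ S
        · simp [h, b.2 j h]
        · simp [h]
      right_inv := fun g => by
        funext j
        simp [j.2] }
  rw [Fintype.card_congr e, Fintype.card_fun]
  congr 1
  have : Fintype.card {j : Fin (n+1) // j ∈ S} = S.card := Fintype.card_coe S
  have h2 := Fintype.card_subtype_compl (fun j : Fin (n+1) => j ∈ S)
  rw [h2, this, Fintype.card_fin]

/-- class sum: summing a class-constant function over a pinned cylinder -/
lemma class_sum (S : Finset (Fin (n+1))) (g : (Fin (n+1) → B) → ℝ)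
    (hg : ∀ b₁ b₂, (∀ j ∈ S, b₁ j = b₂ j) → g b₁ = g b₂) (b₀ : Fin (n+1) → B) :
    ∑ b : Fin (n+1) → B, (if ∀ j ∈ S, b j = b₀ j then g b else 0)
      = (Fintype.card B ^ (n+1 - S.card) : ℝ) * g b₀ := by
  have h1 : ∀ b : Fin (n+1) → B, (if ∀ j ∈ S, b j = b₀ j then g b else 0)
      = (if ∀ j ∈ S, b j = b₀ j then g b₀ else 0) := by
    intro b; split
    · exact hg b b₀ (by assumption)
    · rfl
  simp only [h1]
  rw [← Finset.sum_filter, Finset.sum_const, count_pinned]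
  simp [mul_comm]

/-- pin one coordinate for a function not depending on it -/
lemma sum_pin_one (k : Fin (n+1)) (g : (Fin (n+1) → B) → ℝ)
    (hg : ∀ b y, g (Function.update b k y) = g b) (y₀ : B) :
    ∑ b : Fin (n+1) → B, g b
      = (Fintype.card B : ℝ) * ∑ b : Fin (n+1) → B, (if b k = y₀ then g b else 0) := by
  have h0 : ∀ b : Fin (n+1) → B, g b = ∑ y : B, (if b k = y then g b else 0) := by
    intro b; rw [Finset.sum_ite_eq Finset.univ (b k) (fun _ => g b)]; simp
  rw [Finset.sum_congr rfl (fun b _ => h0 b), Finset.sum_comm]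
  have h1 : ∀ y : B, (∑ b : Fin (n+1) → B, if b k = y then g b else 0)
      = ∑ b : Fin (n+1) → B, (if b k = y₀ then g b else 0) := by
    intro y
    rw [← Finset.sum_filter, ← Finset.sum_filter]
    apply Finset.sum_nbij' (i := fun b => Function.update b k y₀) (j := fun b => Function.update b k y)
    · intro b hb; simp
    · intro b hb; simp
    · intro b hb
      simp only [Finset.mem_filter] at hb
      funext j
      by_cases h : j = k
      · subst h; simp [hb.2]
      · simp [Function.update_of_ne h]
    · intro b hb
      simp only [Finset.mem_filter] at hb
      funext j
      by_cases h : j = k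
      · subst h; simp [hb.2]
      · simp [Function.update_of_ne h]
    · intro b hb; rw [hg]
  simp only [h1]
  rw [Finset.sum_const]
  simp [mul_comm]

lemma card_idxLe (i : Fin (n+1)) : (idxLe n i).card = (i:ℕ) + 1 := by
  have : idxLe n i = Finset.map ⟨Fin.castLE (by omega : (i:ℕ)+1 ≤ n+1), Fin.castLE_injective _⟩ Finset.univ := by
    ext j
    simp only [mem_idxLe, Finset.mem_map, Finset.mem_univ, true_and, Function.Embedding.coeFn_mk]
    constructor
    · intro h; exact ⟨⟨(j:ℕ), by omega⟩, by ext; simp⟩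
    · rintro ⟨x, rfl⟩; simp; omega
  rw [this, Finset.card_map, Finset.card_univ, Fintype.card_fin]

lemma card_idxLt (i : Fin (n+1)) : (idxLt n i).card = (i:ℕ) := by
  have h := card_idxLe (n := n) i
  rw [← insert_idxLt, Finset.card_insert_of_notMem not_mem_idxLt] at h
  omega


section Counting2
variable (μ : (Fin (n+1) → A) → (Fin (n+1) → B) → ℝ)

lemma pB_le_marg (hμ : ∀ a b, 0 ≤ μ a b) (S : Finset (Fin (n+1)))
    (a₀ : Fin (n+1) → A) (b : Fin (n+1) → B) :
    (∑ a : Fin (n+1) → A, μ a b) ≤ marg μ ∅ S a₀ b := by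
  rw [marg_empty_left]
  have := Finset.single_le_sum
    (f := fun b' : Fin (n+1) → B => if ∀ j ∈ S, b' j = b j then ∑ a : Fin (n+1) → A, μ a b' else 0)
    (fun b' _ => by
      split
      · exact Finset.sum_nonneg fun a _ => hμ a b'
      · exact le_rfl) (Finset.mem_univ b)
  simpa using this

lemma weight_transfer (S : Finset (Fin (n+1))) (a₀ : Fin (n+1) → A)
    (h : (Fin (n+1) → B) → ℝ)
    (hh : ∀ b₁ b₂, (∀ j ∈ S, b₁ j = b₂ j) → h b₁ = h b₂) :
    ∑ b : Fin (n+1) → B, marg μ ∅ S a₀ b * h b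
      = (Fintype.card B : ℝ)^(n+1 - S.card)
          * ∑ b : Fin (n+1) → B, (∑ a : Fin (n+1) → A, μ a b) * h b := by
  have h1 : ∀ b : Fin (n+1) → B, marg μ ∅ S a₀ b * h b
      = ∑ b' : Fin (n+1) → B,
          (if ∀ j ∈ S, b' j = b j then (∑ a : Fin (n+1) → A, μ a b') * h b else 0) := by
    intro b
    rw [marg_empty_left, Finset.sum_mul]
    apply Finset.sum_congr rfl; intro b' _
    split <;> simp
  rw [Finset.sum_congr rfl (fun b _ => h1 b), Finset.sum_comm]
  have h2 : ∀ b' : Fin (n+1) → B,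
      (∑ b : Fin (n+1) → B,
        if ∀ j ∈ S, b' j = b j then (∑ a : Fin (n+1) → A, μ a b') * h b else 0)
      = (Fintype.card B : ℝ)^(n+1 - S.card) * ((∑ a : Fin (n+1) → A, μ a b') * h b') := by
    intro b'
    have flip : ∀ b : Fin (n+1) → B,
        (∀ j ∈ S, b' j = b j) ↔ (∀ j ∈ S, b j = b' j) :=
      fun b => ⟨fun h j hj => (h j hj).symm, fun h j hj => (h j hj).symm⟩
    simp only [flip]
    exact class_sum S (fun b => (∑ a : Fin (n+1) → A, μ a b') * h b)
      (fun b₁ b₂ hb => by rw [hh b₁ b₂ hb]) b'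
  rw [Finset.sum_congr rfl (fun b' _ => h2 b'), ← Finset.mul_sum]

lemma pin_mul [Nonempty B] (k : Fin (n+1)) (a₀ : Fin (n+1) → A) (N : (Fin (n+1) → B) → ℝ)
    (hN : ∀ b y, N (Function.update b k y) = N b) :
    ∑ b : Fin (n+1) → B, marg μ ∅ {k} a₀ b * N b
      = (Fintype.card B : ℝ)⁻¹ * (∑ b : Fin (n+1) → B, N b)
          * (∑ b : Fin (n+1) → B, ∑ a : Fin (n+1) → A, μ a b) := by
  have h1 : ∀ b : Fin (n+1) → B, marg μ ∅ {k} a₀ b * N b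
      = ∑ b' : Fin (n+1) → B,
          (if b' k = b k then (∑ a : Fin (n+1) → A, μ a b') * N b else 0) := by
    intro b
    rw [marg_empty_left, Finset.sum_mul]
    apply Finset.sum_congr rfl; intro b' _
    simp only [Finset.mem_singleton, forall_eq]
    split <;> simp
  rw [Finset.sum_congr rfl (fun b _ => h1 b), Finset.sum_comm]
  have h2 : ∀ b' : Fin (n+1) → B,
      (∑ b : Fin (n+1) → B, if b' k = b k then (∑ a : Fin (n+1) → A, μ a b') * N b else 0)
      = (∑ a : Fin (n+1) → A, μ a b') * ((Fintype.card B : ℝ)⁻¹ * ∑ b : Fin (n+1) → B, N b) := by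
    intro b'
    have flip : ∀ b : Fin (n+1) → B, (b' k = b k) ↔ (b k = b' k) := fun b => eq_comm
    simp only [flip]
    have hpin := sum_pin_one k N hN (b' k)
    have hcard : (0:ℝ) < (Fintype.card B : ℝ) := by exact_mod_cast Fintype.card_pos
    have : ∑ b : Fin (n+1) → B, (if b k = b' k then N b else 0)
        = (Fintype.card B : ℝ)⁻¹ * ∑ b : Fin (n+1) → B, N b := by
      field_simp
      linarith [hpin]
    rw [← this, Finset.mul_sum]
    apply Finset.sum_congr rfl; intro b _
    split <;> simp
  rw [Finset.sum_congr rfl (fun b' _ => h2 b')]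
  rw [← Finset.sum_mul]
  ring

end Counting2


section Delta
variable {Q P : Fin (n+1) → (Fin (n+1) → A) → (Fin (n+1) → B) → ℝ}
variable (hQ : IsChannel Q) (hP : IsInput P)
variable [Nonempty A] [Nonempty B]

include hQ hP

lemma delta_nonneg (i : Fin (n+1)) (a₀ : Fin (n+1) → A) :
    0 ≤ ∑ b : Fin (n+1) → B, (∑ a : Fin (n+1) → A, joint Q P a b) *
      Real.log (marg (joint Q P) ∅ (idxLe n i) a₀ b /
        (marg (joint Q P) ∅ {i} a₀ b * marg (joint Q P) ∅ (idxLt n i) a₀ b)) := by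
  set μ := joint Q P with hμdef
  have hμ0 : ∀ a b, 0 ≤ μ a b := joint_nonneg hQ hP
  set pB : (Fin (n+1) → B) → ℝ := fun b => ∑ a : Fin (n+1) → A, μ a b with hpBdef
  have hpB0 : ∀ b, 0 ≤ pB b := fun b => Finset.sum_nonneg fun a _ => hμ0 a b
  have hpBtot : ∑ b : Fin (n+1) → B, pB b = 1 := by
    rw [hpBdef, Finset.sum_comm]; exact joint_sum_one hQ hP
  set D2 : (Fin (n+1) → B) → ℝ := fun b => marg μ ∅ (idxLe n i) a₀ b with hD2def
  set M3 : (Fin (n+1) → B) → ℝ := fun b => marg μ ∅ {i} a₀ b with hM3def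
  set N2 : (Fin (n+1) → B) → ℝ := fun b => marg μ ∅ (idxLt n i) a₀ b with hN2def
  set R : (Fin (n+1) → B) → ℝ := fun b => M3 b * N2 b / D2 b with hRdef
  have hD2nn : ∀ b, 0 ≤ D2 b := fun b => marg_nonneg μ hμ0 _ _ _ _
  have hM3nn : ∀ b, 0 ≤ M3 b := fun b => marg_nonneg μ hμ0 _ _ _ _
  have hN2nn : ∀ b, 0 ≤ N2 b := fun b => marg_nonneg μ hμ0 _ _ _ _
  have hD2ge : ∀ b, pB b ≤ D2 b := fun b => pB_le_marg μ hμ0 _ a₀ b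
  have hM3ge : ∀ b, pB b ≤ M3 b := fun b => pB_le_marg μ hμ0 _ a₀ b
  have hN2ge : ∀ b, pB b ≤ N2 b := fun b => pB_le_marg μ hμ0 _ a₀ b
  have hcard : (0:ℝ) < (Fintype.card B : ℝ) := by exact_mod_cast Fintype.card_pos
  set c : ℝ := (Fintype.card B : ℝ)^(n - (i:ℕ)) with hcdef
  have hc : 0 < c := pow_pos hcard _
  -- R is class-constant on agreement classes of idxLe n i
  have hRclass : ∀ b₁ b₂, (∀ j ∈ idxLe n i, b₁ j = b₂ j) → R b₁ = R b₂ := by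
    intro b₁ b₂ hb
    have h1 : M3 b₁ = M3 b₂ := marg_dep μ ∅ {i} (fun j hj => absurd hj (Finset.notMem_empty j))
      (fun j hj => hb j (by rw [Finset.mem_singleton] at hj; subst hj; exact mem_idxLe_self))
    have h2 : N2 b₁ = N2 b₂ := marg_dep μ ∅ (idxLt n i) (fun j hj => absurd hj (Finset.notMem_empty j))
      (fun j hj => hb j (mem_idxLe.2 (le_of_lt (mem_idxLt.1 hj))))
    have h3 : D2 b₁ = D2 b₂ := marg_dep μ ∅ (idxLe n i) (fun j hj => absurd hj (Finset.notMem_empty j))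
      (fun j hj => hb j hj)
    rw [hRdef]; dsimp only; rw [h1, h2, h3]
  -- Σ* ≤ 1
  have hSigma : ∑ b : Fin (n+1) → B, pB b * R b ≤ 1 := by
    have e1 : ∑ b : Fin (n+1) → B, D2 b * R b
        = (Fintype.card B : ℝ)^(n+1 - (idxLe n i).card) * ∑ b : Fin (n+1) → B, pB b * R b :=
      weight_transfer μ (idxLe n i) a₀ R hRclass
    have e2 : ∑ b : Fin (n+1) → B, D2 b * R b ≤ ∑ b : Fin (n+1) → B, M3 b * N2 b := by
      apply Finset.sum_le_sum
      intro b _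
      by_cases hD : D2 b = 0
      · rw [hD, zero_mul]; exact mul_nonneg (hM3nn b) (hN2nn b)
      · rw [hRdef]; dsimp only; rw [mul_comm (D2 b), div_mul_cancel₀ _ hD]
    have e3 : ∑ b : Fin (n+1) → B, M3 b * N2 b = c := by
      have hN2up : ∀ b y, N2 (Function.update b i y) = N2 b := by
        intro b y
        apply marg_dep μ ∅ (idxLt n i) (fun j hj => absurd hj (Finset.notMem_empty j))
        intro j hj
        apply Function.update_of_ne
        intro h; rw [h] at hj; exact absurd hj not_mem_idxLt
      have := pin_mul μ i a₀ N2 hN2up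
      rw [hM3def] at *
      rw [this]
      have hN2tot : ∑ b : Fin (n+1) → B, N2 b = (Fintype.card B : ℝ)^(n+1 - (i:ℕ)) := by
        have := weight_transfer μ (idxLt n i) a₀ (fun _ => 1) (fun _ _ _ => rfl)
        simp only [mul_one] at this
        rw [hN2def]; dsimp only
        rw [this, card_idxLt, ← hpBdef, hpBtot, mul_one]
      rw [hN2tot, ← hpBdef, hpBtot, mul_one, hcdef]
      have hi : (i:ℕ) ≤ n := by omega
      have : n + 1 - (i:ℕ) = (n - (i:ℕ)) + 1 := by omega
      rw [this, pow_succ]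
      field_simp
    rw [card_idxLe] at e1
    have hexp : n + 1 - ((i:ℕ)+1) = n - (i:ℕ) := by omega
    rw [hexp, ← hcdef] at e1
    have : c * ∑ b : Fin (n+1) → B, pB b * R b ≤ c * 1 := by
      rw [mul_one, ← e1, ← e3]; exact e2
    exact le_of_mul_le_mul_left this hc
  -- log lower bound
  have hlog : ∀ b : Fin (n+1) → B, pB b * (1 - R b) ≤ pB b * Real.log (D2 b / (M3 b * N2 b)) := by
    intro b
    rcases eq_or_lt_of_le (hpB0 b) with h0 | h0
    · rw [← h0]; simp
    · apply mul_le_mul_of_nonneg_left _ (le_of_lt h0)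
      have hD2p : 0 < D2 b := lt_of_lt_of_le h0 (hD2ge b)
      have hM3p : 0 < M3 b := lt_of_lt_of_le h0 (hM3ge b)
      have hN2p : 0 < N2 b := lt_of_lt_of_le h0 (hN2ge b)
      set x : ℝ := D2 b / (M3 b * N2 b) with hxdef
      have hx : 0 < x := div_pos hD2p (mul_pos hM3p hN2p)
      have hinv := Real.log_le_sub_one_of_pos (inv_pos.2 hx)
      rw [Real.log_inv] at hinv
      have hxinv : x⁻¹ = R b := by
        rw [hxdef, hRdef]
        field_simp
      rw [hxinv] at hinv
      linarith
  calc (0:ℝ) = 1 - 1 := by ring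
    _ ≤ (∑ b : Fin (n+1) → B, pB b) - ∑ b : Fin (n+1) → B, pB b * R b := by
        rw [hpBtot]; linarith [hSigma]
    _ = ∑ b : Fin (n+1) → B, pB b * (1 - R b) := by
        rw [← Finset.sum_sub_distrib]
        apply Finset.sum_congr rfl; intro b _; ring
    _ ≤ ∑ b : Fin (n+1) → B, pB b * Real.log (D2 b / (M3 b * N2 b)) :=
        Finset.sum_le_sum fun b _ => hlog b
    _ = _ := rfl

end Delta


section CmiRewrite
variable {Q P : Fin (n+1) → (Fin (n+1) → A) → (Fin (n+1) → B) → ℝ}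
variable (hQ : IsChannel Q) (hP : IsInput P)
variable (hQm : ∀ (i : Fin (n+1)) (a a' : Fin (n+1) → A) (b b' : Fin (n+1) → B),
      a i = a' i → b i = b' i → Q i a b = Q i a' b')

include hQ hP hQm

lemma joint_pos_Q {i : Fin (n+1)} {a : Fin (n+1) → A} {b : Fin (n+1) → B}
    (h : joint Q P a b ≠ 0) : 0 < Q i a b := by
  rcases (hQ.1 i a b).eq_or_lt with h0 | h0
  · exfalso; apply h
    apply Finset.prod_eq_zero (Finset.mem_univ i)
    rw [← h0, zero_mul]
  · exact h0

lemma cmi_T_eq (i : Fin (n+1)) :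
    cmi (joint Q P) (idxLe n i) i (idxLt n i)
      = ∑ a : Fin (n+1) → A, ∑ b : Fin (n+1) → B,
          joint Q P a b * Real.log (Q i a b * marg (joint Q P) ∅ (idxLt n i) a b /
            marg (joint Q P) ∅ (idxLe n i) a b) := by
  unfold cmi
  simp only [insert_idxLt]
  apply Finset.sum_congr rfl; intro a _
  apply Finset.sum_congr rfl; intro b _
  by_cases h : joint Q P a b = 0
  · simp [h]
  · have hμ0 := joint_nonneg hQ hP
    have hpos : 0 < joint Q P a b := lt_of_le_of_ne (hμ0 a b) (Ne.symm h)
    have hD1 : 0 < marg (joint Q P) (idxLe n i) (idxLt n i) a b :=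
      lt_of_lt_of_le hpos (self_le_marg _ hμ0 _ _ a b)
    have hD2 : 0 < marg (joint Q P) ∅ (idxLe n i) a b :=
      lt_of_lt_of_le hpos (self_le_marg _ hμ0 _ _ a b)
    congr 2
    rw [margI1 hQ hP i a b]
    field_simp

lemma cmi_S_eq (i : Fin (n+1)) :
    cmi (joint Q P) {i} i ∅
      = ∑ a : Fin (n+1) → A, ∑ b : Fin (n+1) → B,
          joint Q P a b * Real.log (Q i a b / marg (joint Q P) ∅ {i} a b) := by
  unfold cmi
  have hins : insert i (∅ : Finset (Fin (n+1))) = {i} := rfl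
  simp only [hins]
  apply Finset.sum_congr rfl; intro a _
  apply Finset.sum_congr rfl; intro b _
  by_cases h : joint Q P a b = 0
  · simp [h]
  · have hμ0 := joint_nonneg hQ hP
    have hpos : 0 < joint Q P a b := lt_of_le_of_ne (hμ0 a b) (Ne.symm h)
    have hM2 : 0 < marg (joint Q P) {i} ∅ a b :=
      lt_of_lt_of_le hpos (self_le_marg _ hμ0 _ _ a b)
    have hM3 : 0 < marg (joint Q P) ∅ {i} a b :=
      lt_of_lt_of_le hpos (self_le_marg _ hμ0 _ _ a b)
    congr 2
    rw [margI2 hQ hP hQm i a b, marg_empty_empty hQ hP a b]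
    field_simp

variable [Nonempty A] [Nonempty B]

lemma cmi_T_le_S (i : Fin (n+1)) :
    cmi (joint Q P) (idxLe n i) i (idxLt n i) ≤ cmi (joint Q P) {i} i ∅ := by
  have hμ0 := joint_nonneg hQ hP
  set a₀ : Fin (n+1) → A := fun _ => Classical.arbitrary A with ha₀
  rw [← sub_nonneg, cmi_T_eq hQ hP hQm i, cmi_S_eq hQ hP hQm i]
  have hdiff : (∑ a : Fin (n+1) → A, ∑ b : Fin (n+1) → B,
        joint Q P a b * Real.log (Q i a b / marg (joint Q P) ∅ {i} a b))
      - (∑ a : Fin (n+1) → A, ∑ b : Fin (n+1) → B,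
        joint Q P a b * Real.log (Q i a b * marg (joint Q P) ∅ (idxLt n i) a b /
          marg (joint Q P) ∅ (idxLe n i) a b))
      = ∑ b : Fin (n+1) → B, (∑ a : Fin (n+1) → A, joint Q P a b) *
          Real.log (marg (joint Q P) ∅ (idxLe n i) a₀ b /
            (marg (joint Q P) ∅ {i} a₀ b * marg (joint Q P) ∅ (idxLt n i) a₀ b)) := by
    rw [← Finset.sum_sub_distrib]
    rw [Finset.sum_congr rfl (fun a _ => (Finset.sum_sub_distrib
      (f := fun b => joint Q P a b * Real.log (Q i a b / marg (joint Q P) ∅ {i} a b))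
      (g := fun b => joint Q P a b * Real.log (Q i a b * marg (joint Q P) ∅ (idxLt n i) a b /
        marg (joint Q P) ∅ (idxLe n i) a b))).symm)]
    rw [Finset.sum_comm]
    apply Finset.sum_congr rfl; intro b _
    rw [Finset.sum_mul]
    apply Finset.sum_congr rfl; intro a _
    by_cases h : joint Q P a b = 0
    · simp [h]
    · have hpos : 0 < joint Q P a b := lt_of_le_of_ne (hμ0 a b) (Ne.symm h)
      have hQp : 0 < Q i a b := joint_pos_Q hQ hP hQm h
      have hM3 : 0 < marg (joint Q P) ∅ {i} a b :=
        lt_of_lt_of_le hpos (self_le_marg _ hμ0 _ _ a b)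
      have hN2 : 0 < marg (joint Q P) ∅ (idxLt n i) a b :=
        lt_of_lt_of_le hpos (self_le_marg _ hμ0 _ _ a b)
      have hD2 : 0 < marg (joint Q P) ∅ (idxLe n i) a b :=
        lt_of_lt_of_le hpos (self_le_marg _ hμ0 _ _ a b)
      have e3 : marg (joint Q P) ∅ {i} a₀ b = marg (joint Q P) ∅ {i} a b :=
        marg_empty_left_indep _ _ a₀ a b
      have e2 : marg (joint Q P) ∅ (idxLt n i) a₀ b = marg (joint Q P) ∅ (idxLt n i) a b :=
        marg_empty_left_indep _ _ a₀ a b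
      have e1 : marg (joint Q P) ∅ (idxLe n i) a₀ b = marg (joint Q P) ∅ (idxLe n i) a b :=
        marg_empty_left_indep _ _ a₀ a b
      rw [e1, e2, e3, ← mul_sub]
      congr 1
      rw [Real.log_div hQp.ne' hM3.ne',
        Real.log_div (mul_ne_zero hQp.ne' hN2.ne') hD2.ne',
        Real.log_mul hQp.ne' hN2.ne',
        Real.log_div hD2.ne' (mul_ne_zero hM3.ne' hN2.ne'),
        Real.log_mul hM3.ne' hN2.ne']
      ring
  rw [hdiff]
  exact delta_nonneg hQ hP i a₀

end CmiRewrite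


section ProdMeas
variable (f : Fin (n+1) → A → B → ℝ)

lemma marg_prod (SA SB : Finset (Fin (n+1))) (a : Fin (n+1) → A) (b : Fin (n+1) → B) :
    marg (fun a' b' => ∏ j : Fin (n+1), f j (a' j) (b' j)) SA SB a b
      = ∏ j : Fin (n+1),
          (if j ∈ SA then (if j ∈ SB then f j (a j) (b j) else ∑ y : B, f j (a j) y)
           else (if j ∈ SB then ∑ x : A, f j x (b j) else ∑ x : A, ∑ y : B, f j x y)) := by
  classical
  set f' : Fin (n+1) → A → B → ℝ := fun j x y =>
    (if j ∈ SA then (if x = a j then 1 else 0) else 1) *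
    ((if j ∈ SB then (if y = b j then 1 else 0) else 1) * f j x y) with hf'
  have key : ∀ (a' : Fin (n+1) → A) (b' : Fin (n+1) → B),
      (if (∀ j ∈ SA, a' j = a j) ∧ (∀ j ∈ SB, b' j = b j)
        then ∏ j : Fin (n+1), f j (a' j) (b' j) else 0)
      = ∏ j : Fin (n+1), f' j (a' j) (b' j) := by
    intro a' b'
    by_cases h1 : ∀ j ∈ SA, a' j = a j
    · by_cases h2 : ∀ j ∈ SB, b' j = b j
      · rw [if_pos ⟨h1, h2⟩]
        apply Finset.prod_congr rfl; intro j _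
        rw [hf']; simp only
        by_cases hA : j ∈ SA <;> by_cases hB : j ∈ SB
        · simp [hA, hB, h1 j hA, h2 j hB]
        · simp [hA, hB, h1 j hA]
        · simp [hA, hB, h2 j hB]
        · simp [hA, hB]
      · rw [if_neg (by rintro ⟨-, hh⟩; exact h2 hh)]
        push_neg at h2
        obtain ⟨j, hjB, hjne⟩ := h2
        symm
        apply Finset.prod_eq_zero (Finset.mem_univ j)
        rw [hf']; simp [hjB, hjne]
    · rw [if_neg (by rintro ⟨hh, -⟩; exact h1 hh)]
      push_neg at h1
      obtain ⟨j, hjA, hjne⟩ := h1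
      symm
      apply Finset.prod_eq_zero (Finset.mem_univ j)
      rw [hf']; simp [hjA, hjne]
  unfold marg
  rw [Finset.sum_congr rfl (fun a' _ => Finset.sum_congr rfl (fun b' _ => key a' b'))]
  have inner : ∀ a' : Fin (n+1) → A,
      (∑ b' : Fin (n+1) → B, ∏ j : Fin (n+1), f' j (a' j) (b' j))
      = ∏ j : Fin (n+1), ∑ y : B, f' j (a' j) y := by
    intro a'
    have h := Finset.prod_univ_sum (fun _ : Fin (n+1) => (Finset.univ : Finset B))
      (fun j y => f' j (a' j) y)
    rw [Fintype.piFinset_univ] at h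
    rw [← h]
  rw [Finset.sum_congr rfl (fun a' _ => inner a')]
  have houter := Finset.prod_univ_sum (fun _ : Fin (n+1) => (Finset.univ : Finset A))
    (fun j x => ∑ y : B, f' j x y)
  rw [Fintype.piFinset_univ] at houter
  rw [← houter]
  apply Finset.prod_congr rfl
  intro j _
  rw [hf']
  simp only
  by_cases h1 : j ∈ SA <;> by_cases h2 : j ∈ SB <;>
    simp [h1, h2, Finset.sum_ite_eq', ← Finset.sum_mul, Finset.mul_sum]

end ProdMeas


/-- single–letter channel matrix -/
def Qs (Q : Fin (n+1) → (Fin (n+1) → A) → (Fin (n+1) → B) → ℝ) (j : Fin (n+1)) (x : A) (y : B) : ℝ :=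
  Q j (fun _ => x) (fun _ => y)

noncomputable def piP [Nonempty B] (P : Fin (n+1) → (Fin (n+1) → A) → (Fin (n+1) → B) → ℝ)
    (j : Fin (n+1)) (x : A) : ℝ :=
  P j (fun _ => x) (fun _ => Classical.arbitrary B)

noncomputable def piM [Nonempty B] (μ : (Fin (n+1) → A) → (Fin (n+1) → B) → ℝ)
    (i : Fin (n+1)) (x : A) : ℝ :=
  marg μ {i} ∅ (fun _ => x) (fun _ => Classical.arbitrary B)

lemma sum4_swap {α β γ δ : Type} [Fintype α] [Fintype β] [Fintype γ] [Fintype δ]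
    (F : α → β → γ → δ → ℝ) :
    ∑ x : α, ∑ y : β, ∑ a : γ, ∑ b : δ, F x y a b
      = ∑ a : γ, ∑ b : δ, ∑ x : α, ∑ y : β, F x y a b := by
  rw [Finset.sum_congr rfl (fun x _ => Finset.sum_comm (γ := β) (s := Finset.univ)
    (t := Finset.univ) (f := fun y a => ∑ b : δ, F x y a b))]
  rw [Finset.sum_comm]
  apply Finset.sum_congr rfl; intro a _
  rw [Finset.sum_congr rfl (fun x _ => Finset.sum_comm (s := Finset.univ)
    (t := Finset.univ) (f := fun y b => F x y a b))]
  rw [Finset.sum_comm (s := Finset.univ) (t := Finset.univ)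
    (f := fun x b => ∑ y : β, F x y a b)]

lemma group_ii (μ : (Fin (n+1) → A) → (Fin (n+1) → B) → ℝ) (i : Fin (n+1)) (G : A → B → ℝ) :
    ∑ a : Fin (n+1) → A, ∑ b : Fin (n+1) → B, μ a b * G (a i) (b i)
      = ∑ x : A, ∑ y : B, marg μ {i} {i} (fun _ => x) (fun _ => y) * G x y := by
  have hm : ∀ (x : A) (y : B), marg μ {i} {i} (fun _ => x) (fun _ => y) * G x y
      = ∑ a : Fin (n+1) → A, ∑ b : Fin (n+1) → B,
          (if a i = x ∧ b i = y then μ a b * G x y else 0) := by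
    intro x y
    unfold marg
    simp only [Finset.mem_singleton, forall_eq]
    rw [Finset.sum_mul]
    apply Finset.sum_congr rfl; intro a _
    rw [Finset.sum_mul]
    apply Finset.sum_congr rfl; intro b _
    split <;> simp
  rw [Finset.sum_congr rfl (fun x _ => Finset.sum_congr rfl (fun y _ => hm x y))]
  rw [sum4_swap]
  apply Finset.sum_congr rfl; intro a _
  apply Finset.sum_congr rfl; intro b _
  simp [ite_and, Finset.sum_ite_eq]

section SingleLetter
variable {Q P : Fin (n+1) → (Fin (n+1) → A) → (Fin (n+1) → B) → ℝ}
variable (hQ : IsChannel Q) (hP : IsInput P)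
variable (hQm : ∀ (i : Fin (n+1)) (a a' : Fin (n+1) → A) (b b' : Fin (n+1) → B),
      a i = a' i → b i = b' i → Q i a b = Q i a' b')
variable [Nonempty A] [Nonempty B]

include hQ hP hQm

lemma marg_singleA (i : Fin (n+1)) (a : Fin (n+1) → A) (b : Fin (n+1) → B) :
    marg (joint Q P) {i} ∅ a b = piM (joint Q P) i (a i) := by
  apply marg_dep
  · intro j hj; rw [Finset.mem_singleton] at hj; subst hj; rfl
  · intro j hj; exact absurd hj (Finset.notMem_empty j)

lemma marg_ii (i : Fin (n+1)) (a : Fin (n+1) → A) (b : Fin (n+1) → B) :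
    marg (joint Q P) {i} {i} a b = Qs Q i (a i) (b i) * piM (joint Q P) i (a i) := by
  rw [margI2 hQ hP hQm i a b, marg_singleA hQ hP hQm i a b]
  congr 1
  exact hQm i a (fun _ => a i) b (fun _ => b i) rfl rfl

lemma marg_bi (i : Fin (n+1)) (a : Fin (n+1) → A) (b : Fin (n+1) → B) :
    marg (joint Q P) ∅ {i} a b = ∑ x : A, Qs Q i x (b i) * piM (joint Q P) i x := by
  have h := margSplit_A (joint Q P) (k := i) (SA := ∅) (Finset.notMem_empty i) {i} a b
  have hins : insert i (∅ : Finset (Fin (n+1))) = {i} := rfl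
  rw [hins] at h
  rw [h]
  apply Finset.sum_congr rfl; intro x _
  rw [marg_ii hQ hP hQm i (Function.update a i x) b, Function.update_self]

lemma sum_piM (i : Fin (n+1)) : ∑ x : A, piM (joint Q P) i x = 1 := by
  set a : Fin (n+1) → A := fun _ => Classical.arbitrary A
  set b : Fin (n+1) → B := fun _ => Classical.arbitrary B
  have h := margSplit_A (joint Q P) (k := i) (SA := ∅) (Finset.notMem_empty i) ∅ a b
  rw [marg_empty_empty hQ hP a b] at h
  have hins : insert i (∅ : Finset (Fin (n+1))) = {i} := rfl
  rw [hins] at h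
  have h2 : ∑ x : A, piM (joint Q P) i x
      = ∑ x : A, marg (joint Q P) {i} ∅ (Function.update a i x) b :=
    Finset.sum_congr rfl (fun x _ => by
      rw [marg_singleA hQ hP hQm i (Function.update a i x) b, Function.update_self])
  rw [h2]; exact h.symm

lemma cmi_single_letter (i : Fin (n+1)) :
    cmi (joint Q P) {i} i ∅
      = ∑ x : A, ∑ y : B, (Qs Q i x y * piM (joint Q P) i x) *
          Real.log ((Qs Q i x y * piM (joint Q P) i x) * 1 /
            (piM (joint Q P) i x * ∑ x' : A, Qs Q i x' y * piM (joint Q P) i x')) := by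
  unfold cmi
  have hins : insert i (∅ : Finset (Fin (n+1))) = {i} := rfl
  simp only [hins]
  have hterm : ∀ (a : Fin (n+1) → A) (b : Fin (n+1) → B),
      joint Q P a b * Real.log (marg (joint Q P) {i} {i} a b * marg (joint Q P) ∅ ∅ a b /
        (marg (joint Q P) {i} ∅ a b * marg (joint Q P) ∅ {i} a b))
      = joint Q P a b * Real.log ((Qs Q i (a i) (b i) * piM (joint Q P) i (a i)) * 1 /
          (piM (joint Q P) i (a i) * ∑ x' : A, Qs Q i x' (b i) * piM (joint Q P) i x')) := by
    intro a b
    rw [marg_ii hQ hP hQm, marg_bi hQ hP hQm, marg_singleA hQ hP hQm, marg_empty_empty hQ hP]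
  rw [Finset.sum_congr rfl (fun a _ => Finset.sum_congr rfl (fun b _ => hterm a b))]
  rw [group_ii (joint Q P) i (fun x y => Real.log ((Qs Q i x y * piM (joint Q P) i x) * 1 /
      (piM (joint Q P) i x * ∑ x' : A, Qs Q i x' y * piM (joint Q P) i x')))]
  apply Finset.sum_congr rfl; intro x _
  apply Finset.sum_congr rfl; intro y _
  rw [marg_ii hQ hP hQm]

end SingleLetter


section Part2
variable {Q P : Fin (n+1) → (Fin (n+1) → A) → (Fin (n+1) → B) → ℝ}
variable (hQ : IsChannel Q) (hP : IsInput P)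
variable (hQm : ∀ (i : Fin (n+1)) (a a' : Fin (n+1) → A) (b b' : Fin (n+1) → B),
      a i = a' i → b i = b' i → Q i a b = Q i a' b')
variable (hPm : ∀ (i : Fin (n+1)) (a a' : Fin (n+1) → A) (b b' : Fin (n+1) → B),
      a i = a' i → P i a b = P i a' b')
variable [Nonempty A] [Nonempty B]

include hQ hP hQm hPm

lemma joint_eq_prod (a : Fin (n+1) → A) (b : Fin (n+1) → B) :
    joint Q P a b = ∏ j : Fin (n+1), (Qs Q j (a j) (b j) * piP P j (a j)) := by
  apply Finset.prod_congr rfl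
  intro j _
  congr 1
  · exact hQm j a (fun _ => a j) b (fun _ => b j) rfl rfl
  · exact hPm j a (fun _ => a j) b (fun _ => Classical.arbitrary B) rfl

lemma sum_Qs (j : Fin (n+1)) (x : A) : ∑ y : B, Qs Q j x y = 1 := by
  have h := hQ.2.1 j (fun _ => x) (fun _ => Classical.arbitrary B)
  rw [← h]
  apply Finset.sum_congr rfl; intro y _
  apply hQm j _ _ _ _ rfl
  simp

lemma sum_piP (j : Fin (n+1)) : ∑ x : A, piP P j x = 1 := by
  have h := hP.2.1 j (fun _ => Classical.arbitrary A) (fun _ => Classical.arbitrary B)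
  rw [← h]
  apply Finset.sum_congr rfl; intro x _
  apply hPm j _ _ _ _
  simp

/-- B-marginals of a memoryless joint are products of output pmfs -/
lemma marg_B_prod (SB : Finset (Fin (n+1))) (a : Fin (n+1) → A) (b : Fin (n+1) → B) :
    marg (joint Q P) ∅ SB a b
      = ∏ j ∈ SB, (∑ x : A, Qs Q j x (b j) * piP P j x) := by
  have hμ : joint Q P = fun a' b' => ∏ j : Fin (n+1), (Qs Q j (a' j) (b' j) * piP P j (a' j)) :=
    funext fun a' => funext fun b' => joint_eq_prod hQ hP hQm hPm a' b'
  rw [hμ, marg_prod (fun j x y => Qs Q j x y * piP P j x) ∅ SB a b]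
  have hterm : ∀ j : Fin (n+1),
      (if j ∈ (∅ : Finset (Fin (n+1))) then (if j ∈ SB then Qs Q j (a j) (b j) * piP P j (a j)
          else ∑ y : B, Qs Q j (a j) y * piP P j (a j))
       else (if j ∈ SB then ∑ x : A, Qs Q j x (b j) * piP P j x
          else ∑ x : A, ∑ y : B, Qs Q j x y * piP P j x))
      = (if j ∈ SB then ∑ x : A, Qs Q j x (b j) * piP P j x else 1) := by
    intro j
    rw [if_neg (Finset.notMem_empty j)]
    by_cases h : j ∈ SB
    · rw [if_pos h, if_pos h]
    · rw [if_neg h, if_neg h]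
      have : ∀ x : A, ∑ y : B, Qs Q j x y * piP P j x = piP P j x := by
        intro x
        rw [← Finset.sum_mul, sum_Qs hQ hP hQm hPm j x, one_mul]
      rw [Finset.sum_congr rfl (fun x _ => this x), sum_piP hQ hP hQm hPm j]
  rw [Finset.prod_congr rfl (fun j _ => hterm j)]
  rw [Finset.prod_ite_mem Finset.univ SB (fun j => ∑ x : A, Qs Q j x (b j) * piP P j x),
    Finset.univ_inter]

lemma cmi_eq_of_memoryless (i : Fin (n+1)) :
    cmi (joint Q P) (idxLe n i) i (idxLt n i) = cmi (joint Q P) {i} i ∅ := by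
  rw [cmi_T_eq hQ hP hQm i, cmi_S_eq hQ hP hQm i]
  apply Finset.sum_congr rfl; intro a _
  apply Finset.sum_congr rfl; intro b _
  by_cases h : joint Q P a b = 0
  · simp [h]
  · have hμ0 := joint_nonneg hQ hP
    have hpos : 0 < joint Q P a b := lt_of_le_of_ne (hμ0 a b) (Ne.symm h)
    have hN2 : 0 < marg (joint Q P) ∅ (idxLt n i) a b :=
      lt_of_lt_of_le hpos (self_le_marg _ hμ0 _ _ a b)
    congr 2
    have hD2 : marg (joint Q P) ∅ (idxLe n i) a b
        = marg (joint Q P) ∅ {i} a b * marg (joint Q P) ∅ (idxLt n i) a b := by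
      rw [marg_B_prod hQ hP hQm hPm, marg_B_prod hQ hP hQm hPm, marg_B_prod hQ hP hQm hPm]
      rw [← insert_idxLt, Finset.prod_insert not_mem_idxLt, Finset.prod_singleton]
    rw [hD2]
    exact mul_div_mul_right _ _ hN2.ne'

end Part2


section Bound
variable {Q P : Fin (n+1) → (Fin (n+1) → A) → (Fin (n+1) → B) → ℝ}
variable (hQ : IsChannel Q) (hP : IsInput P)
variable [Nonempty A] [Nonempty B]

include hQ hP

lemma cmi_bound (TA : Finset (Fin (n+1))) (i : Fin (n+1)) (SB : Finset (Fin (n+1))) :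
    cmi (joint Q P) TA i SB
      ≤ (Fintype.card (Fin (n+1) → A) : ℝ) * (Fintype.card (Fin (n+1) → B)) * 2 := by
  have hμ0 := joint_nonneg hQ hP
  have htot := joint_sum_one hQ hP
  have hterm : ∀ (a : Fin (n+1) → A) (b : Fin (n+1) → B),
      joint Q P a b * Real.log (marg (joint Q P) TA (insert i SB) a b
          * marg (joint Q P) ∅ SB a b /
        (marg (joint Q P) TA SB a b * marg (joint Q P) ∅ (insert i SB) a b)) ≤ 2 := by
    intro a b
    by_cases h : joint Q P a b = 0
    · rw [h, zero_mul]; norm_num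
    · set μ := joint Q P
      have hpos : 0 < μ a b := lt_of_le_of_ne (hμ0 a b) (Ne.symm h)
      have hN1le : marg μ TA (insert i SB) a b ≤ 1 := by
        have := marg_le_total μ hμ0 TA (insert i SB) a b; rwa [htot] at this
      have hN2le : marg μ ∅ SB a b ≤ 1 := by
        have := marg_le_total μ hμ0 ∅ SB a b; rwa [htot] at this
      have hN1 : 0 < marg μ TA (insert i SB) a b :=
        lt_of_lt_of_le hpos (self_le_marg μ hμ0 _ _ a b)
      have hN2 : 0 < marg μ ∅ SB a b :=
        lt_of_lt_of_le hpos (self_le_marg μ hμ0 _ _ a b)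
      have hD1 : μ a b ≤ marg μ TA SB a b := self_le_marg μ hμ0 _ _ a b
      have hD2 : μ a b ≤ marg μ ∅ (insert i SB) a b := self_le_marg μ hμ0 _ _ a b
      set x : ℝ := marg μ TA (insert i SB) a b * marg μ ∅ SB a b /
        (marg μ TA SB a b * marg μ ∅ (insert i SB) a b) with hx
      have hxpos : 0 < x := div_pos (mul_pos hN1 hN2)
        (mul_pos (lt_of_lt_of_le hpos hD1) (lt_of_lt_of_le hpos hD2))
      have hxle : x ≤ 1 / (μ a b * μ a b) := by
        rw [hx]
        apply div_le_div₀ zero_le_one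
          (by nlinarith)
          (mul_pos hpos hpos)
          (by nlinarith)
      have hlog : Real.log x ≤ Real.log (1 / (μ a b * μ a b)) :=
        Real.log_le_log hxpos hxle
      have h1μ : (0:ℝ) < 1 / μ a b := by positivity
      have hlog2 : Real.log (1 / (μ a b * μ a b)) = 2 * Real.log (1 / μ a b) := by
        rw [show (1 : ℝ) / (μ a b * μ a b) = (1 / μ a b) * (1 / μ a b) by
          field_simp]
        rw [Real.log_mul h1μ.ne' h1μ.ne']
        ring
      have hlog3 : Real.log (1 / μ a b) ≤ 1 / μ a b - 1 :=
        Real.log_le_sub_one_of_pos h1μ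
      have hμle1 : μ a b * (1 / μ a b) = 1 := by field_simp
      calc μ a b * Real.log x ≤ μ a b * (2 * Real.log (1 / μ a b)) := by
            rw [← hlog2]
            exact mul_le_mul_of_nonneg_left hlog (le_of_lt hpos)
        _ ≤ μ a b * (2 * (1 / μ a b - 1)) := by
            apply mul_le_mul_of_nonneg_left _ (le_of_lt hpos)
            linarith
        _ = 2 * (μ a b * (1 / μ a b)) - 2 * μ a b := by ring
        _ = 2 - 2 * μ a b := by rw [hμle1]; norm_num
        _ ≤ 2 := by linarith [hμ0 a b]
  unfold cmi
  calc (∑ a : Fin (n+1) → A, ∑ b : Fin (n+1) → B, joint Q P a b *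
        Real.log (marg (joint Q P) TA (insert i SB) a b * marg (joint Q P) ∅ SB a b /
          (marg (joint Q P) TA SB a b * marg (joint Q P) ∅ (insert i SB) a b)))
      ≤ ∑ _a : Fin (n+1) → A, ∑ _b : Fin (n+1) → B, (2:ℝ) :=
        Finset.sum_le_sum fun a _ => Finset.sum_le_sum fun b _ => hterm a b
    _ = (Fintype.card (Fin (n+1) → A) : ℝ) * (Fintype.card (Fin (n+1) → B)) * 2 := by
        simp [Finset.sum_const, Finset.card_univ, mul_assoc]

lemma DI_bound : DI (joint Q P)
    ≤ (n+1 : ℝ) * ((Fintype.card (Fin (n+1) → A) : ℝ) * (Fintype.card (Fin (n+1) → B)) * 2) := by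
  unfold DI
  calc (∑ i : Fin (n+1), cmi (joint Q P) (idxLe n i) i (idxLt n i))
      ≤ ∑ _i : Fin (n+1), (Fintype.card (Fin (n+1) → A) : ℝ) * (Fintype.card (Fin (n+1) → B)) * 2 :=
        Finset.sum_le_sum fun i _ => cmi_bound hQ hP _ i _
    _ = (n+1 : ℝ) * ((Fintype.card (Fin (n+1) → A) : ℝ) * (Fintype.card (Fin (n+1) → B)) * 2) := by
        rw [Finset.sum_const, Finset.card_univ, Fintype.card_fin, nsmul_eq_mul]
        push_cast
        ring

end Bound

lemma isInput_unif [Nonempty A] :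
    IsInput (n := n) (A := A) (B := B) (fun _ _ _ => (Fintype.card A : ℝ)⁻¹) := by
  refine ⟨fun i a b => by positivity, fun i a b => ?_, fun i a a' b b' _ _ => rfl⟩
  rw [Finset.sum_const, Finset.card_univ, nsmul_eq_mul]
  have : (Fintype.card A : ℝ) ≠ 0 := by
    exact_mod_cast Fintype.card_ne_zero
  field_simp

lemma cmi_zero_of_empty (μ : (Fin (n+1) → A) → (Fin (n+1) → B) → ℝ)
    (h : IsEmpty A ∨ IsEmpty B) (TA : Finset (Fin (n+1))) (i : Fin (n+1))
    (SB : Finset (Fin (n+1))) : cmi μ TA i SB = 0 := by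
  rcases h with h | h
  · have : IsEmpty (Fin (n+1) → A) := ⟨fun f => h.false (f 0)⟩
    unfold cmi
    rw [Finset.univ_eq_empty, Finset.sum_empty]
  · have : IsEmpty (Fin (n+1) → B) := ⟨fun f => h.false (f 0)⟩
    unfold cmi
    apply Finset.sum_eq_zero; intro a _
    rw [Finset.univ_eq_empty, Finset.sum_empty]

lemma DI_zero_of_empty (μ : (Fin (n+1) → A) → (Fin (n+1) → B) → ℝ)
    (h : IsEmpty A ∨ IsEmpty B) : DI μ = 0 := by
  unfold DI
  exact Finset.sum_eq_zero fun i _ => cmi_zero_of_empty μ h _ i _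


section Final
variable {Q P : Fin (n+1) → (Fin (n+1) → A) → (Fin (n+1) → B) → ℝ}
variable (hQ : IsChannel Q) (hP : IsInput P)
variable (hQm : ∀ (i : Fin (n+1)) (a a' : Fin (n+1) → A) (b b' : Fin (n+1) → B),
      a i = a' i → b i = b' i → Q i a b = Q i a' b')
variable (hPm : ∀ (i : Fin (n+1)) (a a' : Fin (n+1) → A) (b b' : Fin (n+1) → B),
      a i = a' i → P i a b = P i a' b')
variable [Nonempty A] [Nonempty B]

include hQ hP hQm hPm in
lemma marg_A_prod (SA : Finset (Fin (n+1))) (a : Fin (n+1) → A) (b : Fin (n+1) → B) :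
    marg (joint Q P) SA ∅ a b = ∏ j ∈ SA, piP P j (a j) := by
  have hμ : joint Q P = fun a' b' => ∏ j : Fin (n+1), (Qs Q j (a' j) (b' j) * piP P j (a' j)) :=
    funext fun a' => funext fun b' => joint_eq_prod hQ hP hQm hPm a' b'
  rw [hμ, marg_prod (fun j x y => Qs Q j x y * piP P j x) SA ∅ a b]
  have hterm : ∀ j : Fin (n+1),
      (if j ∈ SA then (if j ∈ (∅ : Finset (Fin (n+1))) then Qs Q j (a j) (b j) * piP P j (a j)
          else ∑ y : B, Qs Q j (a j) y * piP P j (a j))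
       else (if j ∈ (∅ : Finset (Fin (n+1))) then ∑ x : A, Qs Q j x (b j) * piP P j x
          else ∑ x : A, ∑ y : B, Qs Q j x y * piP P j x))
      = (if j ∈ SA then piP P j (a j) else 1) := by
    intro j
    have hpi : ∀ x : A, ∑ y : B, Qs Q j x y * piP P j x = piP P j x := by
      intro x
      rw [← Finset.sum_mul, sum_Qs hQ hP hQm hPm j x, one_mul]
    by_cases h : j ∈ SA
    · rw [if_pos h, if_pos h, if_neg (Finset.notMem_empty j), hpi]
    · rw [if_neg h, if_neg h, if_neg (Finset.notMem_empty j)]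
      rw [Finset.sum_congr rfl (fun x _ => hpi x), sum_piP hQ hP hQm hPm j]
  rw [Finset.prod_congr rfl (fun j _ => hterm j)]
  rw [Finset.prod_ite_mem Finset.univ SA (fun j => piP P j (a j)), Finset.univ_inter]

include hQ hP hQm in
lemma isInput_piM :
    IsInput (fun (i : Fin (n+1)) (a : Fin (n+1) → A) (_b : Fin (n+1) → B)
      => piM (joint Q P) i (a i)) := by
  refine ⟨fun i a b => marg_nonneg _ (joint_nonneg hQ hP) _ _ _ _, fun i a b => ?_,
    fun i a a' b b' ha _ => by simp only; rw [ha i (le_refl _)]⟩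
  simp only [Function.update_self]
  exact sum_piM hQ hP hQm i

include hQ hP hQm in
lemma DI_le_memoryless :
    DI (joint Q P) ≤ DI (joint Q (fun (i : Fin (n+1)) (a : Fin (n+1) → A)
      (_b : Fin (n+1) → B) => piM (joint Q P) i (a i))) := by
  set P' : Fin (n+1) → (Fin (n+1) → A) → (Fin (n+1) → B) → ℝ :=
    fun i a _b => piM (joint Q P) i (a i) with hP'def
  have hP' : IsInput P' := isInput_piM hQ hP hQm
  have hP'm : ∀ (i : Fin (n+1)) (a a' : Fin (n+1) → A) (b b' : Fin (n+1) → B),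
      a i = a' i → P' i a b = P' i a' b' := by
    intro i a a' b b' h
    rw [hP'def]; simp only; rw [h]
  have hpim : ∀ i : Fin (n+1), piM (joint Q P') i = piM (joint Q P) i := by
    intro i
    funext x
    have h1 : piM (joint Q P') i x
        = marg (joint Q P') {i} ∅ (fun _ => x) (fun _ => Classical.arbitrary B) := rfl
    rw [h1, marg_A_prod hQ hP' hQm hP'm {i} _ _, Finset.prod_singleton]
    rfl
  unfold DI
  apply le_trans (Finset.sum_le_sum fun i _ => cmi_T_le_S hQ hP hQm i)
  apply le_of_eq
  apply Finset.sum_congr rfl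
  intro i _
  rw [cmi_eq_of_memoryless hQ hP' hQm hP'm i, cmi_single_letter hQ hP hQm i,
    cmi_single_letter hQ hP' hQm i, hpim i]

end Final

/-- for a memoryless channel `Q_i(b_i | a_i)`, the supremum of directed
information over all feedback input kernels equals the supremum over memoryless input
distributions `π_i(a_i)`, and for such inputs directed information equals
`∑_i I(A_i; B_i)` (feedback does not increase the finite-horizon capacity). -/
theorem stmt6 (Q : Fin (n+1) → (Fin (n+1) → A) → (Fin (n+1) → B) → ℝ)
    (hQ : IsChannel Q)
    (hQmemless : ∀ (i : Fin (n+1)) (a a' : Fin (n+1) → A) (b b' : Fin (n+1) → B),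
      a i = a' i → b i = b' i → Q i a b = Q i a' b') :
    sSup {x : ℝ | ∃ P : Fin (n+1) → (Fin (n+1) → A) → (Fin (n+1) → B) → ℝ,
        IsInput P ∧ x = DI (joint Q P)}
      = sSup {x : ℝ | ∃ P : Fin (n+1) → (Fin (n+1) → A) → (Fin (n+1) → B) → ℝ,
          IsInput P ∧
          (∀ (i : Fin (n+1)) (a a' : Fin (n+1) → A) (b b' : Fin (n+1) → B),
            a i = a' i → P i a b = P i a' b') ∧
          x = DI (joint Q P)}
    ∧ ∀ P : Fin (n+1) → (Fin (n+1) → A) → (Fin (n+1) → B) → ℝ,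
        IsInput P →
        (∀ (i : Fin (n+1)) (a a' : Fin (n+1) → A) (b b' : Fin (n+1) → B),
          a i = a' i → P i a b = P i a' b') →
        DI (joint Q P) = ∑ i : Fin (n+1), cmi (joint Q P) {i} i ∅ := by
  constructor
  · -- sSup equality
    rcases isEmpty_or_nonempty A with hA | hA
    · have hsets : {x : ℝ | ∃ P : Fin (n+1) → (Fin (n+1) → A) → (Fin (n+1) → B) → ℝ,
          IsInput P ∧ x = DI (joint Q P)}
        = {x : ℝ | ∃ P : Fin (n+1) → (Fin (n+1) → A) → (Fin (n+1) → B) → ℝ,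
          IsInput P ∧
          (∀ (i : Fin (n+1)) (a a' : Fin (n+1) → A) (b b' : Fin (n+1) → B),
            a i = a' i → P i a b = P i a' b') ∧
          x = DI (joint Q P)} := by
        ext x
        constructor
        · rintro ⟨P, hPi, hx⟩
          exact ⟨P, hPi, fun i a a' b b' _ => (hA.false (a 0)).elim, hx⟩
        · rintro ⟨P, hPi, -, hx⟩
          exact ⟨P, hPi, hx⟩
      rw [hsets]
    rcases isEmpty_or_nonempty B with hB | hB
    · have hsets : {x : ℝ | ∃ P : Fin (n+1) → (Fin (n+1) → A) → (Fin (n+1) → B) → ℝ,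
          IsInput P ∧ x = DI (joint Q P)}
        = {x : ℝ | ∃ P : Fin (n+1) → (Fin (n+1) → A) → (Fin (n+1) → B) → ℝ,
          IsInput P ∧
          (∀ (i : Fin (n+1)) (a a' : Fin (n+1) → A) (b b' : Fin (n+1) → B),
            a i = a' i → P i a b = P i a' b') ∧
          x = DI (joint Q P)} := by
        ext x
        constructor
        · rintro ⟨P, hPi, hx⟩
          exact ⟨P, hPi, fun i a a' b b' _ => (hB.false (b 0)).elim, hx⟩
        · rintro ⟨P, hPi, -, hx⟩
          exact ⟨P, hPi, hx⟩
      rw [hsets]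
    · -- main case
      set S₁ := {x : ℝ | ∃ P : Fin (n+1) → (Fin (n+1) → A) → (Fin (n+1) → B) → ℝ,
          IsInput P ∧ x = DI (joint Q P)} with hS₁
      set S₂ := {x : ℝ | ∃ P : Fin (n+1) → (Fin (n+1) → A) → (Fin (n+1) → B) → ℝ,
          IsInput P ∧
          (∀ (i : Fin (n+1)) (a a' : Fin (n+1) → A) (b b' : Fin (n+1) → B),
            a i = a' i → P i a b = P i a' b') ∧
          x = DI (joint Q P)} with hS₂
      have hsub : S₂ ⊆ S₁ := by
        rintro x ⟨P, hPi, -, hx⟩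
        exact ⟨P, hPi, hx⟩
      have hbdd₁ : BddAbove S₁ := by
        refine ⟨(n+1 : ℝ) * ((Fintype.card (Fin (n+1) → A) : ℝ)
          * (Fintype.card (Fin (n+1) → B)) * 2), ?_⟩
        rintro x ⟨P, hPi, rfl⟩
        exact DI_bound hQ hPi
      have hbdd₂ : BddAbove S₂ := BddAbove.mono hsub hbdd₁
      have hmem₂ : DI (joint Q (fun _ _ _ => (Fintype.card A : ℝ)⁻¹)) ∈ S₂ :=
        ⟨_, isInput_unif, fun _ _ _ _ _ _ => rfl, rfl⟩
      have hne₂ : S₂.Nonempty := ⟨_, hmem₂⟩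
      have hne₁ : S₁.Nonempty := hne₂.mono hsub
      apply le_antisymm
      · apply csSup_le hne₁
        rintro x ⟨P, hPi, rfl⟩
        have hle := DI_le_memoryless hQ hPi hQmemless
        refine le_trans hle (le_csSup hbdd₂ ?_)
        exact ⟨_, isInput_piM hQ hPi hQmemless,
          fun i a a' b b' h => by rw [h], rfl⟩
      · exact csSup_le_csSup hbdd₁ hne₂ hsub
  · -- part 2
    intro P hPi hPm
    rcases isEmpty_or_nonempty A with hA | hA
    · rw [DI_zero_of_empty _ (Or.inl hA)]
      exact (Finset.sum_eq_zero fun i _ => cmi_zero_of_empty _ (Or.inl hA) _ i _).symm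
    rcases isEmpty_or_nonempty B with hB | hB
    · rw [DI_zero_of_empty _ (Or.inr hB)]
      exact (Finset.sum_eq_zero fun i _ => cmi_zero_of_empty _ (Or.inr hB) _ i _).symm
    · unfold DI
      exact Finset.sum_congr rfl fun i _ => cmi_eq_of_memoryless hQ hPi hQmemless hPm i
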